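/- Let G be a group, H ≤ G a subgroup of index 2, and ρ a finite-dimensional representation of G over a field of characteristic zero such that tr ρ(g) = 0 for all g ∉ H. If ρ is semisimple, then ρ ≅ ρ ⊗ μ, where μ is the nontrivial character of G/H. -/

import Mathlib

open LinearMap Submodule Module

universe v

section helpers

variable {k : Type*} {A : Type*} [Field k] [Ring A] [Algebra k A]

/-- The scalar action of `r : A` as a `k`-linear map. -/
def smulLin (k : Type*) {A : Type*} [CommSemiring k] [Ring A] [Algebra k A]
    (E : Type*) [AddCommGroup E] [Module k E] [Module A E] [IsScalarTower k A E]
    (r : A) : E →ₗ[k] E where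
  toFun x := r • x
  map_add' := smul_add r
  map_smul' c x := (smul_comm r c x)

@[simp] lemma smulLin_apply (E : Type*) [AddCommGroup E] [Module k E] [Module A E]
    [IsScalarTower k A E] (r : A) (x : E) : smulLin k E r x = r • x := rfl

lemma pi_isSemisimple {A : Type*} [Ring A] {E : Type*} [AddCommGroup E] [Module A E]
    [IsSemisimpleModule A E] {ι : Type*} [Fintype ι] [DecidableEq ι] :
    IsSemisimpleModule A (ι → E) := by
  refine isSemisimpleModule_of_isSemisimpleModule_submodule'
    (p := fun i : ι => LinearMap.range (LinearMap.single A (fun _ : ι => E) i)) (fun i => ?_) ?_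
  · exact IsSemisimpleModule.congr
      (LinearEquiv.ofInjective _ (Pi.single_injective (M := fun _ : ι => E) i)).symm
  · rw [eq_top_iff]
    intro x _
    have hx : x = ∑ i, Pi.single i (x i) := (Finset.univ_sum_single x).symm
    rw [hx]
    exact Submodule.sum_mem _ fun i _ => Submodule.mem_iSup_of_mem i ⟨x i, rfl⟩

lemma prod_isSemisimple {A : Type*} [Ring A] {M N : Type*} [AddCommGroup M] [Module A M]
    [AddCommGroup N] [Module A N] [IsSemisimpleModule A M] [IsSemisimpleModule A N] :
    IsSemisimpleModule A (M × N) := by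
  refine isSemisimpleModule_of_isSemisimpleModule_submodule'
    (p := fun b : Bool => if b then LinearMap.range (LinearMap.inl A M N)
      else LinearMap.range (LinearMap.inr A M N)) (fun b => ?_) ?_
  · cases b
    · simpa using IsSemisimpleModule.congr
        (LinearEquiv.ofInjective _ (LinearMap.inr_injective (M := M) (M₂ := N))).symm
    · simpa using IsSemisimpleModule.congr
        (LinearEquiv.ofInjective _ (LinearMap.inl_injective (M := M) (M₂ := N))).symm
  · rw [eq_top_iff]
    rintro ⟨m, n⟩ _
    have h : (m, n) = (m, 0) + (0, n) := by simp
    rw [h]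
    exact add_mem (Submodule.mem_iSup_of_mem true (by simp))
      (Submodule.mem_iSup_of_mem false (by simp))

/-- Density-style lemma: a `k`-linear endomorphism of a finite-dimensional semisimple
`A`-module commuting with all `A`-endomorphisms is given by the action of an element of `A`. -/
lemma exists_smul_eq_of_comm {E : Type*} [AddCommGroup E] [Module k E] [Module A E]
    [IsScalarTower k A E] [FiniteDimensional k E] [IsSemisimpleModule A E]
    (f : E →ₗ[k] E) (hf : ∀ (φ : E →ₗ[A] E) (x : E), f (φ x) = φ (f x)) :
    ∃ r : A, ∀ x : E, r • x = f x := by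
  classical
  set n := finrank k E with hn
  set b := Module.finBasis k E with hb
  haveI : IsSemisimpleModule A (Fin n → E) := pi_isSemisimple
  set e : Fin n → E := fun i => b i with he
  set W : Submodule A (Fin n → E) := Submodule.span A {e} with hW
  obtain ⟨Q, hQ⟩ := exists_isCompl W
  set π : (Fin n → E) →ₗ[A] (Fin n → E) := W.subtype.comp (W.projectionOnto Q hQ) with hπdef
  have hπ : ∀ x ∈ W, π x = x := by
    intro x hx
    have := Submodule.projectionOnto_apply_left hQ ⟨x, hx⟩
    exact congrArg (Subtype.val) this
  have hπrange : ∀ x, π x ∈ W := fun x => (W.projectionOnto Q hQ x).2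
  have hcomm : ∀ (ψ : (Fin n → E) →ₗ[A] (Fin n → E)) (x : Fin n → E) (i : Fin n),
      f ((ψ x) i) = (ψ (fun j => f (x j))) i := by
    intro ψ x i
    have hx : x = ∑ j, Pi.single j (x j) := (Finset.univ_sum_single x).symm
    have key : ∀ (y : E) (j : Fin n),
        f ((ψ (Pi.single j y)) i) = (ψ (Pi.single j (f y))) i := by
      intro y j
      have := hf ((LinearMap.proj i).comp (ψ.comp (LinearMap.single A (fun _ : Fin n => E) j))) y
      simpa using this
    have hψx : ψ x = ∑ j, ψ (Pi.single j (x j)) := by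
      conv_lhs => rw [hx]
      exact map_sum ψ _ _
    calc f ((ψ x) i) = f ((∑ j, ψ (Pi.single j (x j))) i) := by rw [hψx]
    _ = ∑ j, f ((ψ (Pi.single j (x j))) i) := by
        rw [Finset.sum_apply]; exact map_sum f _ _
    _ = ∑ j, (ψ (Pi.single j (f (x j)))) i := by
        exact Finset.sum_congr rfl fun j _ => key (x j) j
    _ = (∑ j, ψ (Pi.single j (f (x j)))) i := by rw [Finset.sum_apply]
    _ = (ψ (fun j => f (x j))) i := by rw [← map_sum, Finset.univ_sum_single]
  have hmem : (fun i => f (e i)) ∈ W := by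
    have h1 : π e = e := hπ e (Submodule.mem_span_singleton_self e)
    have h2 : (fun i => f (e i)) = π (fun j => f (e j)) := by
      funext i
      calc f (e i) = f ((π e) i) := by rw [h1]
      _ = (π (fun j => f (e j))) i := hcomm π e i
    rw [h2]; exact hπrange _
  obtain ⟨r, hr⟩ := Submodule.mem_span_singleton.mp hmem
  refine ⟨r, ?_⟩
  have hbasis : ∀ i, r • b i = f (b i) := by
    intro i
    have := congrFun hr i
    simpa [he] using this
  have : smulLin k E r = f := b.ext fun i => by simpa using hbasis i
  intro x
  exact congrFun (congrArg (fun g : E →ₗ[k] E => (g : E → E)) this) x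

end helpers

section lattice

variable {A : Type*} [Ring A] {E : Type*} [AddCommGroup E] [Module A E]

lemma simple_le_sSup_exists_iso [IsSemisimpleModule A E] {s : Set (Submodule A E)}
    (hs : ∀ W ∈ s, IsSimpleModule A ↥W) {T : Submodule A E} (hT : IsSimpleModule A ↥T)
    (hle : T ≤ sSup s) : ∃ W ∈ s, Nonempty (↥T ≃ₗ[A] ↥W) := by
  obtain ⟨Q, hQ⟩ := exists_isCompl T
  set π : E →ₗ[A] ↥T := T.projectionOnto Q hQ with hπdef
  have hex : ∃ W ∈ s, π.comp W.subtype ≠ 0 := by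
    by_contra hcon
    push_neg at hcon
    have hker : sSup s ≤ ker π := by
      refine sSup_le fun W hW => fun x hx => ?_
      have := congrFun (congrArg (fun g : ↥W →ₗ[A] ↥T => (g : ↥W → ↥T)) (hcon W hW)) ⟨x, hx⟩
      simpa using this
    haveI := hT
    haveI := IsSimpleModule.nontrivial A ↥T
    obtain ⟨t, ht⟩ := exists_ne (0 : ↥T)
    have h1 : π (t : E) = t := Submodule.projectionOnto_apply_left hQ t
    have h2 : π (t : E) = 0 := hker (hle t.2)
    exact ht (by rw [← h1, h2])
  obtain ⟨W, hWs, hne⟩ := hex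
  haveI := hs W hWs
  haveI := hT
  exact ⟨W, hWs, ⟨(LinearEquiv.ofBijective _ (bijective_of_ne_zero hne)).symm⟩⟩

lemma map_simple (φ : E →ₗ[A] E) (W : Submodule A E) (hW : IsSimpleModule A ↥W) :
    Submodule.map φ W = ⊥ ∨
      (IsSimpleModule A ↥(Submodule.map φ W) ∧ Nonempty (↥W ≃ₗ[A] ↥(Submodule.map φ W))) := by
  haveI := hW
  set f : ↥W →ₗ[A] E := φ.comp W.subtype with hfdef
  have hrange : LinearMap.range f = Submodule.map φ W := by
    rw [hfdef, LinearMap.range_comp, Submodule.range_subtype]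
  rcases injective_or_eq_zero f with hinj | h0
  · right
    have e : ↥W ≃ₗ[A] ↥(Submodule.map φ W) :=
      (LinearEquiv.ofInjective f hinj).trans (LinearEquiv.ofEq _ _ hrange)
    exact ⟨IsSimpleModule.congr e.symm, ⟨e⟩⟩
  · left
    rw [← hrange, h0, LinearMap.range_zero]

end lattice

section key

variable {k : Type*} {A : Type*} [Field k] [CharZero k] [Ring A] [Algebra k A]

/-- Key step: if `M`, `N` are finite-dimensional semisimple `A`-modules with equal traces,
then every simple submodule of `M` has an isomorphic copy inside `N`. -/
lemma exists_iso_submodule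
    {M N : Type v} [AddCommGroup M] [Module k M] [Module A M] [IsScalarTower k A M]
    [FiniteDimensional k M] [IsSemisimpleModule A M]
    [AddCommGroup N] [Module k N] [Module A N] [IsScalarTower k A N]
    [FiniteDimensional k N] [IsSemisimpleModule A N]
    (htr : ∀ a : A, trace k M (smulLin k M a) = trace k N (smulLin k N a))
    (S : Submodule A M) (hS : IsSimpleModule A ↥S) :
    ∃ S' : Submodule A N, IsSimpleModule A ↥S' ∧ Nonempty (↥S ≃ₗ[A] ↥S') := by
  by_contra hcon
  push_neg at hcon
  haveI : IsSemisimpleModule A (M × N) := prod_isSemisimple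
  set sP : Set (Submodule A (M × N)) :=
    {W | IsSimpleModule A ↥W ∧ Nonempty (↥W ≃ₗ[A] ↥S)} with hsP
  set sQ : Set (Submodule A (M × N)) :=
    {W | IsSimpleModule A ↥W ∧ ¬ Nonempty (↥W ≃ₗ[A] ↥S)} with hsQ
  set P : Submodule A (M × N) := sSup sP with hPdef
  set Q : Submodule A (M × N) := sSup sQ with hQdef
  have hPsimple : ∀ W ∈ sP, IsSimpleModule A ↥W := fun W h => h.1
  have hQsimple : ∀ W ∈ sQ, IsSimpleModule A ↥W := fun W h => h.1
  -- every member of sP is killed by the second projection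
  have hPle : P ≤ ker (LinearMap.snd A M N) := by
    refine sSup_le fun W hW => ?_
    obtain ⟨hWsimp, ⟨ι⟩⟩ := hW
    haveI := hWsimp
    set g : ↥W →ₗ[A] N := (LinearMap.snd A M N).comp W.subtype with hgdef
    rcases injective_or_eq_zero g with hinj | h0
    · exfalso
      have e : ↥W ≃ₗ[A] ↥(LinearMap.range g) := LinearEquiv.ofInjective g hinj
      exact (hcon (LinearMap.range g) (IsSimpleModule.congr e.symm)).false (ι.symm.trans e)
    · intro x hx
      have := congrFun (congrArg (fun h : ↥W →ₗ[A] N => (h : ↥W → N)) h0) ⟨x, hx⟩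
      simpa [hgdef] using this
  -- invariance of P and Q under A-endomorphisms
  have hmapP : ∀ φ : (M × N) →ₗ[A] (M × N), Submodule.map φ P ≤ P := by
    intro φ
    have heq : Submodule.map φ P = ⨆ W : sP, Submodule.map φ (W : Submodule A (M × N)) := by
      rw [hPdef, sSup_eq_iSup', Submodule.map_iSup]
    rw [heq, hPdef]
    refine iSup_le fun W => ?_
    rcases map_simple φ W.1 W.2.1 with hbot | ⟨hsimp, ⟨e⟩⟩
    · rw [hbot]; exact bot_le
    · obtain ⟨ι⟩ := W.2.2
      have hm : Submodule.map φ W.1 ∈ sP := ⟨hsimp, ⟨e.symm.trans ι⟩⟩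
      exact le_sSup hm
  have hmapQ : ∀ φ : (M × N) →ₗ[A] (M × N), Submodule.map φ Q ≤ Q := by
    intro φ
    have heq : Submodule.map φ Q = ⨆ W : sQ, Submodule.map φ (W : Submodule A (M × N)) := by
      rw [hQdef, sSup_eq_iSup', Submodule.map_iSup]
    rw [heq, hQdef]
    refine iSup_le fun W => ?_
    rcases map_simple φ W.1 W.2.1 with hbot | ⟨hsimp, ⟨e⟩⟩
    · rw [hbot]; exact bot_le
    · have hm : Submodule.map φ W.1 ∈ sQ :=
        ⟨hsimp, fun ⟨ι⟩ => W.2.2 ⟨e.trans ι⟩⟩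
      exact le_sSup hm
  -- P and Q are complementary
  have htop : P ⊔ Q = ⊤ := by
    rw [eq_top_iff, ← IsSemisimpleModule.sSup_simples_eq_top A (M × N)]
    refine sSup_le fun W hW => ?_
    by_cases h : Nonempty (↥W ≃ₗ[A] ↥S)
    · exact le_sup_of_le_left (le_sSup (show W ∈ sP from ⟨hW, h⟩))
    · exact le_sup_of_le_right (le_sSup (show W ∈ sQ from ⟨hW, h⟩))
  have hbot : P ⊓ Q = ⊥ := by
    rcases IsSemisimpleModule.eq_bot_or_exists_simple_le (P ⊓ Q) with h | ⟨T, hTle, hTsimp⟩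
    · exact h
    · exfalso
      obtain ⟨W, hWsP, ⟨ι1⟩⟩ :=
        simple_le_sSup_exists_iso hPsimple hTsimp (hTle.trans inf_le_left)
      obtain ⟨W', hWsQ, ⟨ι2⟩⟩ :=
        simple_le_sSup_exists_iso hQsimple hTsimp (hTle.trans inf_le_right)
      obtain ⟨ιS⟩ := hWsP.2
      exact hWsQ.2 ⟨ι2.symm.trans (ι1.trans ιS)⟩
  have hcompl : IsCompl P Q := IsCompl.of_eq hbot htop
  set π : (M × N) →ₗ[A] (M × N) := P.subtype.comp (P.projectionOnto Q hcompl) with hπdef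
  have hπleft : ∀ x ∈ P, π x = x := by
    intro x hx
    have := Submodule.projectionOnto_apply_left hcompl ⟨x, hx⟩
    exact congrArg Subtype.val this
  have hπright : ∀ x ∈ Q, π x = 0 := by
    intro x hx
    have := Submodule.projectionOnto_apply_right hcompl ⟨x, hx⟩
    exact congrArg Subtype.val this
  have hπP : ∀ x, π x ∈ P := fun x => (P.projectionOnto Q hcompl x).2
  have hdecomp : ∀ x : M × N, ∃ xp ∈ P, ∃ xq ∈ Q, xp + xq = x := by
    intro x
    have : x ∈ P ⊔ Q := htop.symm ▸ Submodule.mem_top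
    exact Submodule.mem_sup.mp this
  have hπcomm : ∀ (φ : (M × N) →ₗ[A] (M × N)) (x : M × N), π (φ x) = φ (π x) := by
    intro φ x
    obtain ⟨xp, hxp, xq, hxq, hsum⟩ := hdecomp x
    have hπx : π x = xp := by
      rw [← hsum, map_add, hπleft xp hxp, hπright xq hxq, add_zero]
    have hφxp : φ xp ∈ P := hmapP φ ⟨xp, hxp, rfl⟩
    have hφxq : φ xq ∈ Q := hmapQ φ ⟨xq, hxq, rfl⟩
    have e1 : π (φ x) = φ xp := by
      rw [← hsum, map_add, map_add, hπleft _ hφxp, hπright _ hφxq, add_zero]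
    have e2 : φ (π x) = φ xp := by rw [hπx]
    rw [e1, e2]
  -- density: π is the action of some r : A
  obtain ⟨r, hr⟩ := exists_smul_eq_of_comm (k := k) (A := A) (π.restrictScalars k)
    (fun φ x => by simpa using hπcomm φ x)
  -- r kills N
  have hNzero : ∀ y : N, r • y = 0 := by
    intro y
    have h1 : r • ((0 : M), y) = π ((0 : M), y) := hr _
    have h2 : (π ((0 : M), y)).2 = 0 := hPle (hπP _)
    have h3 : (r • ((0 : M), y)).2 = r • y := rfl
    rw [h1] at h3
    rw [h2] at h3
    exact h3.symm
  have hNtr : trace k N (smulLin k N r) = 0 := by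
    have : smulLin k N r = 0 := by
      ext y; simpa using hNzero y
    rw [this, map_zero]
  -- trace of the projection
  have hsplit : smulLin k (M × N) r = (smulLin k M r).prodMap (smulLin k N r) := by
    ext x <;> rfl
  have hEtr : trace k (M × N) (smulLin k (M × N) r)
      = trace k M (smulLin k M r) + trace k N (smulLin k N r) := by
    rw [hsplit, trace_prodMap']
  have hproj : IsProj (P.restrictScalars k) (smulLin k (M × N) r) := by
    constructor
    · intro x
      show r • x ∈ P
      rw [hr x]; exact hπP x
    · intro x hx
      show r • x = x
      rw [hr x]; exact hπleft x hx
  have htrP : trace k (M × N) (smulLin k (M × N) r)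
      = (finrank k ↥(P.restrictScalars k) : k) := hproj.trace
  -- contradiction
  have hzero : trace k M (smulLin k M r) = 0 := by rw [htr r, hNtr]
  have : (finrank k ↥(P.restrictScalars k) : k) = 0 := by
    rw [← htrP, hEtr, hzero, hNtr, add_zero]
  have hfrank : finrank k ↥(P.restrictScalars k) = 0 := by exact_mod_cast this
  have hPbot : P = ⊥ := by
    have := (Submodule.finrank_eq_zero (S := P.restrictScalars k)).mp hfrank
    exact (Submodule.restrictScalars_eq_bot_iff k A (M × N)).mp this
  -- but the copy of S inside M × N is contained in P
  have hmem : S.map (LinearMap.inl A M N) ∈ sP := by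
    have e : ↥S ≃ₗ[A] ↥(S.map (LinearMap.inl A M N)) :=
      Submodule.equivMapOfInjective _ LinearMap.inl_injective S
    exact ⟨IsSimpleModule.congr e.symm, ⟨e.symm⟩⟩
  have hSle : S.map (LinearMap.inl A M N) ≤ P := le_sSup hmem
  haveI := hS
  haveI := IsSimpleModule.nontrivial A ↥S
  obtain ⟨s₀, hs₀⟩ := exists_ne (0 : ↥S)
  have : ((s₀ : M), (0 : N)) ∈ S.map (LinearMap.inl A M N) := ⟨(s₀ : M), s₀.2, rfl⟩
  have hmem0 : ((s₀ : M), (0 : N)) ∈ (⊥ : Submodule A (M × N)) := hPbot ▸ hSle this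
  rw [Submodule.mem_bot] at hmem0
  apply hs₀
  ext
  exact congrArg Prod.fst hmem0

end key

section induction

variable {k : Type*} {A : Type*} [Field k] [CharZero k] [Ring A] [Algebra k A]

lemma equiv_of_subsingleton
    {M N : Type v} [AddCommGroup M] [Module A M] [AddCommGroup N] [Module A N]
    (hM : Subsingleton M) (hN : Subsingleton N) : Nonempty (M ≃ₗ[A] N) := by
  haveI := hM; haveI := hN
  exact ⟨LinearEquiv.ofLinear 0 0 (Subsingleton.elim _ _) (Subsingleton.elim _ _)⟩

lemma trivial_of_traces_eq
    {M N : Type v} [AddCommGroup M] [Module k M] [Module A M] [IsScalarTower k A M]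
    [FiniteDimensional k M]
    [AddCommGroup N] [Module k N] [Module A N] [IsScalarTower k A N]
    [FiniteDimensional k N]
    (htr : ∀ a : A, trace k M (smulLin k M a) = trace k N (smulLin k N a))
    (hM : Subsingleton M) : Subsingleton N := by
  have h1 : smulLin k M (1 : A) = 0 := Subsingleton.elim _ _
  have h2 : smulLin k N (1 : A) = LinearMap.id := by
    ext x; simp
  have h3 : trace k N (smulLin k N (1 : A)) = (finrank k N : k) := by
    rw [h2]; exact trace_id k N
  have h4 : (finrank k N : k) = 0 := by
    rw [← h3, ← htr 1, h1, map_zero]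
  have h5 : finrank k N = 0 := by exact_mod_cast h4
  exact Module.finrank_zero_iff.mp h5

/-- Brauer–Nesbitt: finite-dimensional semisimple modules over a `k`-algebra (char 0)
with equal traces are isomorphic. -/
lemma nonempty_equiv_of_traces_eq :
    ∀ (n : ℕ) (M N : Type v) [AddCommGroup M] [Module k M] [Module A M] [IsScalarTower k A M]
      [FiniteDimensional k M] [IsSemisimpleModule A M]
      [AddCommGroup N] [Module k N] [Module A N] [IsScalarTower k A N]
      [FiniteDimensional k N] [IsSemisimpleModule A N],
      finrank k M ≤ n →
      (∀ a : A, trace k M (smulLin k M a) = trace k N (smulLin k N a)) →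
      Nonempty (M ≃ₗ[A] N) := by
  intro n
  induction n with
  | zero =>
    intro M N _ _ _ _ _ _ _ _ _ _ _ _ hrank htr
    have hM : Subsingleton M := Module.finrank_zero_iff.mp (Nat.le_zero.mp hrank)
    exact equiv_of_subsingleton hM (trivial_of_traces_eq htr hM)
  | succ n ih =>
    intro M N _ _ _ _ _ _ _ _ _ _ _ _ hrank htr
    by_cases hM0 : finrank k M = 0
    · have hM : Subsingleton M := Module.finrank_zero_iff.mp hM0
      exact equiv_of_subsingleton hM (trivial_of_traces_eq htr hM)
    · haveI : Nontrivial M := by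
        by_contra hcon
        rw [not_nontrivial_iff_subsingleton] at hcon
        exact hM0 (Module.finrank_zero_iff.mpr hcon)
      obtain ⟨S, hSsimp⟩ := IsSemisimpleModule.exists_simple_submodule A M
      obtain ⟨S', hS'simp, ⟨ι⟩⟩ := exists_iso_submodule htr S hSsimp
      obtain ⟨M₀, hM₀⟩ := exists_isCompl S
      obtain ⟨N₀, hN₀⟩ := exists_isCompl S'
      haveI : FiniteDimensional k ↥S :=
        FiniteDimensional.of_injective (S.subtype.restrictScalars k) Subtype.val_injective
      haveI : FiniteDimensional k ↥M₀ :=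
        FiniteDimensional.of_injective (M₀.subtype.restrictScalars k) Subtype.val_injective
      haveI : FiniteDimensional k ↥S' :=
        FiniteDimensional.of_injective (S'.subtype.restrictScalars k) Subtype.val_injective
      haveI : FiniteDimensional k ↥N₀ :=
        FiniteDimensional.of_injective (N₀.subtype.restrictScalars k) Subtype.val_injective
      set eM : (↥S × ↥M₀) ≃ₗ[A] M := Submodule.prodEquivOfIsCompl _ _ hM₀ with heM
      set eN : (↥S' × ↥N₀) ≃ₗ[A] N := Submodule.prodEquivOfIsCompl _ _ hN₀ with heN
      -- trace identities
      have htrM : ∀ a : A, trace k M (smulLin k M a)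
          = trace k ↥S (smulLin k ↥S a) + trace k ↥M₀ (smulLin k ↥M₀ a) := by
        intro a
        have hconj : smulLin k M a = (eM.restrictScalars k).conj (smulLin k (↥S × ↥M₀) a) := by
          refine LinearMap.ext fun x => ?_
          rw [LinearEquiv.conj_apply]
          show a • x = eM (a • (eM.symm x))
          rw [map_smul, eM.apply_symm_apply]
        rw [hconj, trace_conj']
        have hsplit : smulLin k (↥S × ↥M₀) a
            = (smulLin k ↥S a).prodMap (smulLin k ↥M₀ a) := by ext x <;> rfl
        rw [hsplit, trace_prodMap']
      have htrN : ∀ a : A, trace k N (smulLin k N a)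
          = trace k ↥S' (smulLin k ↥S' a) + trace k ↥N₀ (smulLin k ↥N₀ a) := by
        intro a
        have hconj : smulLin k N a = (eN.restrictScalars k).conj (smulLin k (↥S' × ↥N₀) a) := by
          refine LinearMap.ext fun x => ?_
          rw [LinearEquiv.conj_apply]
          show a • x = eN (a • (eN.symm x))
          rw [map_smul, eN.apply_symm_apply]
        rw [hconj, trace_conj']
        have hsplit : smulLin k (↥S' × ↥N₀) a
            = (smulLin k ↥S' a).prodMap (smulLin k ↥N₀ a) := by ext x <;> rfl
        rw [hsplit, trace_prodMap']
      have htrS : ∀ a : A, trace k ↥S (smulLin k ↥S a) = trace k ↥S' (smulLin k ↥S' a) := by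
        intro a
        have hconj : smulLin k ↥S' a = (ι.restrictScalars k).conj (smulLin k ↥S a) := by
          refine LinearMap.ext fun x => ?_
          rw [LinearEquiv.conj_apply]
          show a • x = ι (a • (ι.symm x))
          rw [map_smul, ι.apply_symm_apply]
        rw [hconj, trace_conj']
      have htr₀ : ∀ a : A, trace k ↥M₀ (smulLin k ↥M₀ a) = trace k ↥N₀ (smulLin k ↥N₀ a) := by
        intro a
        have h1 := htrM a
        have h2 := htrN a
        have h3 := htr a
        have h4 := htrS a
        rw [h1, h2, h4] at h3
        exact add_left_cancel h3
      -- dimension count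
      have hdim : finrank k M = finrank k ↥S + finrank k ↥M₀ := by
        rw [← (eM.restrictScalars k).finrank_eq, Module.finrank_prod]
      haveI : Nontrivial ↥S := IsSimpleModule.nontrivial A ↥S
      have hSpos : 0 < finrank k ↥S := Module.finrank_pos
      have hle : finrank k ↥M₀ ≤ n := by omega
      obtain ⟨ψ⟩ := ih ↥M₀ ↥N₀ hle htr₀
      exact ⟨eM.symm.trans ((ι.prodCongr ψ).trans eN)⟩

end induction

section application

variable {k : Type*} [Field k] {G : Type*} [Group G] {V : Type*} [AddCommGroup V] [Module k V]

/-- Twist of a representation by a character `μ : G →* kˣ`. -/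
def twistRep (ρ : Representation k G V) (μ : G →* kˣ) : Representation k G V where
  toFun g := (μ g : k) • ρ g
  map_one' := by simp
  map_mul' g h := by
    simp only [map_mul, Units.val_mul]
    rw [smul_mul_smul_comm]

@[simp] lemma twistRep_apply (ρ : Representation k G V) (μ : G →* kˣ) (g : G) :
    twistRep ρ μ g = (μ g : k) • ρ g := rfl

/-- The character `μ` as a monoid hom into the monoid algebra. -/
noncomputable def charHom (k : Type*) [Field k] {G : Type*} [Group G] (μ : G →* kˣ) :
    G →* MonoidAlgebra k G where
  toFun g := MonoidAlgebra.single g ((μ g : k))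
  map_one' := by simp [MonoidAlgebra.one_def]
  map_mul' g h := by
    show MonoidAlgebra.single (g * h) ((μ (g * h) : k)) = _
    rw [map_mul, Units.val_mul, MonoidAlgebra.single_mul_single]

/-- The twisting algebra endomorphism of the monoid algebra. -/
noncomputable def twistAlg (k : Type*) [Field k] {G : Type*} [Group G] (μ : G →* kˣ) :
    MonoidAlgebra k G →ₐ[k] MonoidAlgebra k G :=
  MonoidAlgebra.lift k (MonoidAlgebra k G) G (charHom k μ)

lemma twistAlg_single (μ : G →* kˣ) (g : G) (c : k) :
    twistAlg k μ (MonoidAlgebra.single g c) = MonoidAlgebra.single g (c * (μ g : k)) := by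
  rw [twistAlg, MonoidAlgebra.lift_single]
  show c • MonoidAlgebra.single g ((μ g : k)) = _
  rw [MonoidAlgebra.smul_single']

end application

/-- Let `H ≤ G` be a subgroup of index 2, `ρ` a semisimple finite-dimensional
representation of `G` over a field `k` of characteristic zero whose trace vanishes
off `H`, and `μ : G → kˣ` the nontrivial character of `G/H`.  Then `ρ ≅ ρ ⊗ μ`. -/
theorem stmt_14 {G : Type*} [Group G] (H : Subgroup G) (hH : H.index = 2)
    {k : Type*} [Field k] [CharZero k] {V : Type*} [AddCommGroup V] [Module k V]
    [FiniteDimensional k V] (ρ : Representation k G V)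
    (hss : IsSemisimpleModule (MonoidAlgebra k G) ρ.asModule)
    (htr : ∀ g : G, g ∉ H → LinearMap.trace k V (ρ g) = 0)
    (μ : G →* kˣ) (hμ : ∀ g : G, (g ∈ H → (μ g : k) = 1) ∧ (g ∉ H → (μ g : k) = -1)) :
    ∃ e : V ≃ₗ[k] V, ∀ (g : G) (v : V), e (ρ g v) = (μ g : k) • ρ g (e v) := by
  classical
  set A := MonoidAlgebra k G with hA
  set τ : Representation k G V := twistRep ρ μ with hτ
  set σ : A →ₐ[k] A := twistAlg k μ with hσ
  -- μ squares to 1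
  have hμsq : ∀ g : G, (μ g : k) * (μ g : k) = 1 := by
    intro g
    by_cases h : g ∈ H
    · rw [(hμ g).1 h]; ring
    · rw [(hμ g).2 h]; ring
  -- σ is an involution
  have hσσ : ∀ x : A, σ (σ x) = x := by
    have : σ.comp σ = AlgHom.id k A := by
      apply MonoidAlgebra.algHom_ext
      intro g
      rw [AlgHom.comp_apply]
      rw [show σ = twistAlg k μ from hσ]
      rw [twistAlg_single, twistAlg_single, one_mul, AlgHom.id_apply, mul_comm,
        hμsq g]
      exact Subsingleton.elim _ _
    intro x
    exact AlgHom.congr_fun this x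
  -- τ's algebra hom factors through σ
  have hτρ : ∀ a : A, τ.asAlgebraHom a = ρ.asAlgebraHom (σ a) := by
    have : τ.asAlgebraHom = ρ.asAlgebraHom.comp σ := by
      apply MonoidAlgebra.algHom_ext
      intro g
      rw [AlgHom.comp_apply, show σ = twistAlg k μ from hσ, twistAlg_single, one_mul,
        Representation.asAlgebraHom_single, Representation.asAlgebraHom_single, one_smul]
      rfl
      exact Subsingleton.elim _ _
    intro a
    rw [this]; rfl
  -- instances on the module side
  haveI instTowρ : IsScalarTower k A ρ.asModule := by
    refine IsScalarTower.of_algebraMap_smul fun c x => ?_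
    have c1 : @Eq V ((algebraMap k A c) • x) (ρ.asAlgebraHom (algebraMap k A c) x) := rfl
    have c2 : ρ.asAlgebraHom (algebraMap k A c) x = (algebraMap k (Module.End k V) c) x := by
      rw [AlgHom.commutes]
    exact c1.trans (c2.trans (Module.algebraMap_end_apply k k V c x))
  haveI instTowτ : IsScalarTower k A τ.asModule := by
    refine IsScalarTower.of_algebraMap_smul fun c x => ?_
    have c1 : @Eq V ((algebraMap k A c) • x) (τ.asAlgebraHom (algebraMap k A c) x) := rfl
    have c2 : τ.asAlgebraHom (algebraMap k A c) x = (algebraMap k (Module.End k V) c) x := by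
      rw [AlgHom.commutes]
    exact c1.trans (c2.trans (Module.algebraMap_end_apply k k V c x))
  haveI instFDρ : FiniteDimensional k ρ.asModule := inferInstanceAs (FiniteDimensional k V)
  haveI instFDτ : FiniteDimensional k τ.asModule := inferInstanceAs (FiniteDimensional k V)
  haveI instSSτ : IsSemisimpleModule A τ.asModule := by
    haveI : RingHomSurjective (σ : A →+* A) := ⟨fun y => ⟨σ y, hσσ y⟩⟩
    let l : τ.asModule →ₛₗ[(σ : A →+* A)] ρ.asModule :=
      { toFun := fun x => (x : V)
        map_add' := fun x y => rfl
        map_smul' := fun a x => by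
          show τ.asAlgebraHom a x = ρ.asAlgebraHom (σ a) x
          rw [hτρ a] }
    have hlbij : Function.Bijective l := ⟨fun a b h => h, fun y => ⟨y, rfl⟩⟩
    exact (LinearMap.isSemisimpleModule_iff_of_bijective l hlbij).mpr hss
  -- equality of traces
  have htrA : ∀ a : A,
      LinearMap.trace k ρ.asModule (smulLin k ρ.asModule a)
        = LinearMap.trace k τ.asModule (smulLin k τ.asModule a) := by
    have main : (LinearMap.trace k V).comp (ρ.asAlgebraHom.toLinearMap)
        = (LinearMap.trace k V).comp (τ.asAlgebraHom.toLinearMap) := by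
      refine MonoidAlgebra.lhom_ext' fun g => LinearMap.ext fun c => ?_
      show LinearMap.trace k V (ρ.asAlgebraHom (MonoidAlgebra.single g c))
        = LinearMap.trace k V (τ.asAlgebraHom (MonoidAlgebra.single g c))
      rw [Representation.asAlgebraHom_single, Representation.asAlgebraHom_single]
      rw [map_smul, map_smul]
      by_cases h : g ∈ H
      · rw [show τ g = (μ g : k) • ρ g from rfl, map_smul, (hμ g).1 h, one_smul]
      · rw [show τ g = (μ g : k) • ρ g from rfl, map_smul, htr g h, smul_zero, smul_zero,
          smul_zero]
    intro a
    show LinearMap.trace k V (ρ.asAlgebraHom a) = LinearMap.trace k V (τ.asAlgebraHom a)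
    exact LinearMap.congr_fun main a
  -- apply Brauer–Nesbitt
  obtain ⟨Φ⟩ := nonempty_equiv_of_traces_eq (k := k) (A := A)
    (Module.finrank k ρ.asModule) ρ.asModule τ.asModule le_rfl htrA
  refine ⟨{ toFun := fun v => Φ v
            invFun := fun v => Φ.symm v
            map_add' := fun x y => Φ.map_add x y
            map_smul' := fun c v => ?_
            left_inv := fun v => Φ.symm_apply_apply v
            right_inv := fun v => Φ.apply_symm_apply v }, ?_⟩
  · show Φ (c • v) = c • Φ v
    have h0 : ∀ x : ρ.asModule, Φ (c • x) = c • Φ x := by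
      intro x
      have e1 : (c • x : ρ.asModule) = (algebraMap k A c) • x := (algebraMap_smul A c x).symm
      rw [e1, Φ.map_smul]
      exact algebraMap_smul A c (Φ x)
    exact h0 v
  · intro g v
    show Φ (ρ g v) = (μ g : k) • ρ g (Φ v)
    let x : ρ.asModule := v
    have h1 : Φ (ρ g v) = Φ ((MonoidAlgebra.of k G g) • x) := by
      apply congrArg
      show ρ g v = ρ.asAlgebraHom (MonoidAlgebra.of k G g) v
      rw [Representation.asAlgebraHom_of]
    have h3 : ((MonoidAlgebra.of k G g) • (Φ x) : τ.asModule) = (μ g : k) • ρ g (Φ x) := by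
      show τ.asAlgebraHom (MonoidAlgebra.of k G g) (Φ x) = _
      rw [Representation.asAlgebraHom_of]
      rfl
    exact h1.trans ((Φ.map_smul _ _).trans h3)
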